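/- arXiv:1702.05468 — 3 statements merged into one kernel-verified Lean document; each statement's English description precedes it below -/
import Mathlib

section
/- (Corollary on marginal distribution bounds.) Let Q be a rate matrix on a countable state space S such that {z ∈ S : q(z,x) ≠ 0} is finite for every x ∈ S, let w be norm-like, suppose P_{w,c} is non-empty, and let {A_i}_{i∈I} be a collection of pairwise disjoint subsets of S with ∪_{i∈I} A_i = S. For a stationary solution π define its marginal π̂(i) := ∑_{x∈A_i} π(x). Let I_r := {i ∈ I : A_i ∩ S_r ≠ ∅}, define l̂^r(i) := inf{∑_{x∈A_i} π^r(x) : π^r ∈ P^r_{w,c}} and û^r(i) := sup{∑_{x∈A_i} π^r(x) : π^r ∈ P^r_{w,c}} for i ∈ I_r, and l̂^r(i) := û^r(i) := 0 for i ∉ I_r. Then: (i) for any π ∈ P_{w,c} and r ≥ 1, l̂^r(i) ≤ π̂(i) for all i ∈ I, ‖l̂^r − π̂‖ = 1 − ∑_{i∈I_r} l̂^r(i), and ‖û^r − π̂‖ ≤ max{∑_{i∈I_r} û^r(i) − 1 + m_r, m_r} ≤ max{∑_{i∈I_r} û^r(i) − 1 + c/r, c/r}, where m_r := ∑_{x∉S_r}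 π(x); (ii) if P_{w,c} = {π} is a singleton, then û^r converges pointwise to π̂ and l̂^r converges to π̂ in total variation as r → ∞. -/
open scoped Classical

open Filter

/-- The set `P_{w,c}` of stationary solutions `π` of the CME for the rate matrix `q`
(`π ≥ 0`, `∑ π = 1`, `πQ(x) = 0` for all `x`) satisfying the moment bound `⟨w⟩ ≤ c`. -/
def statSet {σ : Type*} (q : σ → σ → ℝ) (w : σ → ℝ) (c : ℝ) : Set (σ → ℝ) :=
  {π | (∀ x, 0 ≤ π x) ∧ HasSum π 1 ∧ (∀ x, HasSum (fun y => π y * q y x) 0) ∧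
    Summable (fun x => w x * π x) ∧ (∑' x, w x * π x) ≤ c}

/-- The truncation `S_r = {x : w(x) < r}`. -/
def truncSet {σ : Type*} (w : σ → ℝ) (r : ℝ) : Set σ := {x | w x < r}

/-- The set `N_r` of states of `S_r` whose stationary equation only involves states of
`S_r`. -/
def eqStates {σ : Type*} (q : σ → σ → ℝ) (w : σ → ℝ) (r : ℝ) : Set σ :=
  {x | w x < r ∧ ∀ z, q z x ≠ 0 → w z < r}

/-- The outer approximation `P^r_{w,c}`: all `π^r ≥ 0` vanishing outside `S_r` with
`π^r Q(x) = 0` for `x ∈ N_r`, `1 - c/r ≤ ∑ π^r ≤ 1` and `∑ w π^r ≤ c`. -/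
def truncPolytope {σ : Type*} (q : σ → σ → ℝ) (w : σ → ℝ) (c r : ℝ) : Set (σ → ℝ) :=
  {ρ | (∀ x, 0 ≤ ρ x) ∧ (∀ x, ¬ w x < r → ρ x = 0) ∧
    (∀ x ∈ eqStates q w r, ∑' y, ρ y * q y x = 0) ∧
    1 - c / r ≤ ∑' x, ρ x ∧ (∑' x, ρ x) ≤ 1 ∧ (∑' x, w x * ρ x) ≤ c}

/-- The total variation distance `‖ρ₁ - ρ₂‖ = sup_{A ⊆ S} |∑_{x ∈ A} (ρ₁(x) - ρ₂(x))|`. -/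
noncomputable def tvDist {σ : Type*} (ρ₁ ρ₂ : σ → ℝ) : ℝ :=
  ⨆ A : Set σ, |∑' x : A, (ρ₁ x - ρ₂ x)|

section Helpers

variable {σ : Type*} {ι : Type*}

lemma tsum_subtype_le' {f : σ → ℝ} (hf0 : ∀ x, 0 ≤ f x) (hf : Summable f) (s : Set σ) :
    ∑' x : s, f x ≤ ∑' x, f x := by
  rw [tsum_subtype]
  exact Summable.tsum_le_tsum (fun x => Set.indicator_le_self' (fun x _ => hf0 x) x)
    (hf.indicator s) hf

lemma tsum_subtype_nonneg {f : σ → ℝ} (hf0 : ∀ x, 0 ≤ f x) (s : Set σ) :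
    0 ≤ ∑' x : s, f x :=
  tsum_nonneg fun x => hf0 x

/-- tail bound: if `∑ w f ≤ c` then the mass of `f` outside `S_r` is at most `c/r`. -/
lemma tail_bound {w : σ → ℝ} {c r : ℝ} (hr : 0 < r) {f : σ → ℝ}
    (hf0 : ∀ x, 0 ≤ f x) (hf : Summable f) (hwf : Summable fun x => w x * f x)
    (hw0 : ∀ x, 0 ≤ w x) (hwfc : (∑' x, w x * f x) ≤ c) :
    ∑' x : ↥(truncSet w r)ᶜ, f x ≤ c / r := by
  rw [le_div_iff₀ hr]
  have h1 : (∑' x : ↥(truncSet w r)ᶜ, f x) * r = ∑' x : ↥(truncSet w r)ᶜ, f x * r :=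
    (tsum_mul_right).symm
  rw [h1]
  have h2 : ∑' x : ↥(truncSet w r)ᶜ, f x * r ≤ ∑' x : ↥(truncSet w r)ᶜ, w x * f x := by
    refine Summable.tsum_le_tsum (fun x => ?_) ((hf.subtype _).mul_right r) (hwf.subtype _)
    have hx : r ≤ w (x : σ) := le_of_not_gt x.2
    calc f (x : σ) * r = r * f (x : σ) := mul_comm _ _
    _ ≤ w (x : σ) * f (x : σ) := mul_le_mul_of_nonneg_right hx (hf0 _)
  refine h2.trans ((tsum_subtype_le' (fun x => mul_nonneg (hw0 x) (hf0 x)) hwf _).trans hwfc)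

lemma statSet_c_nonneg {q : σ → σ → ℝ} {w : σ → ℝ} {c : ℝ} (hw : ∀ x, 0 ≤ w x)
    {π : σ → ℝ} (hπ : π ∈ statSet q w c) : 0 ≤ c :=
  le_trans (tsum_nonneg fun x => mul_nonneg (hw x) (hπ.1 x)) hπ.2.2.2.2

/-- the partition sum lemma -/
lemma partition_hasSum {A : ι → Set σ} (hdisj : ∀ i j, i ≠ j → Disjoint (A i) (A j))
    (hcov : (⋃ i, A i) = Set.univ) {f : σ → ℝ} (hf : Summable f) :
    HasSum (fun i => ∑' x : A i, f x) (∑' x, f x) := by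
  have hbij : Function.Bijective (fun p : Σ i, ↥(A i) => (p.2 : σ)) := by
    constructor
    · rintro ⟨i, x⟩ ⟨j, y⟩ h
      simp only at h
      have hij : i = j := by
        by_contra hne
        exact Set.disjoint_left.mp (hdisj i j hne) x.2 (by rw [h]; exact y.2)
      subst hij
      simp only [Sigma.mk.inj_iff, heq_eq_eq, true_and]
      exact Subtype.ext h
    · intro x
      have hx : x ∈ ⋃ i, A i := hcov ▸ Set.mem_univ x
      obtain ⟨i, hi⟩ := Set.mem_iUnion.mp hx
      exact ⟨⟨i, x, hi⟩, rfl⟩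
  have h1 : HasSum (fun p : Σ i, ↥(A i) => f (p.2 : σ)) (∑' x, f x) :=
    (Equiv.hasSum_iff (Equiv.ofBijective _ hbij)).mpr hf.hasSum
  exact h1.sigma fun i => (hf.subtype (A i)).hasSum

end Helpers

section Helpers2

variable {σ : Type*} {ι : Type*}

/-- members of the truncated polytope have finite support, hence everything is summable -/
lemma truncPolytope_summable_mul {q : σ → σ → ℝ} {w : σ → ℝ} {c r : ℝ}
    (hw_norm : (truncSet w r).Finite) {ρ : σ → ℝ} (hρ : ρ ∈ truncPolytope q w c r)
    (g : σ → ℝ) : Summable (fun x => g x * ρ x) := by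
  refine summable_of_ne_finset_zero (s := hw_norm.toFinset) fun x hx => ?_
  rw [Set.Finite.mem_toFinset] at hx
  rw [hρ.2.1 x hx, mul_zero]

lemma truncPolytope_summable {q : σ → σ → ℝ} {w : σ → ℝ} {c r : ℝ}
    (hw_norm : (truncSet w r).Finite) {ρ : σ → ℝ} (hρ : ρ ∈ truncPolytope q w c r) :
    Summable ρ := by
  refine summable_of_ne_finset_zero (s := hw_norm.toFinset) fun x hx => ?_
  rw [Set.Finite.mem_toFinset] at hx
  exact hρ.2.1 x hx

/-- w-tail bound for polytope members -/
lemma truncPolytope_tail {q : σ → σ → ℝ} {w : σ → ℝ} {c r m : ℝ} (hm : 0 < m)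
    (hw0 : ∀ x, 0 ≤ w x) (hw_norm : (truncSet w r).Finite)
    {ρ : σ → ℝ} (hρ : ρ ∈ truncPolytope q w c r) :
    ∑' x : ↥(truncSet w m)ᶜ, ρ x ≤ c / m :=
  tail_bound hm hρ.1 (truncPolytope_summable hw_norm hρ)
    (truncPolytope_summable_mul hw_norm hρ w) hw0 hρ.2.2.2.2.2

/-- subset mass of a polytope member lies in [0,1] -/
lemma truncPolytope_mass_le_one {q : σ → σ → ℝ} {w : σ → ℝ} {c r : ℝ}
    (hw_norm : (truncSet w r).Finite) {ρ : σ → ℝ} (hρ : ρ ∈ truncPolytope q w c r)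
    (s : Set σ) : ∑' x : s, ρ x ≤ 1 :=
  (tsum_subtype_le' hρ.1 (truncPolytope_summable hw_norm hρ) s).trans hρ.2.2.2.2.1

/-- the truncation of a stationary distribution belongs to the truncated polytope -/
lemma indicator_mem_truncPolytope {q : σ → σ → ℝ} {w : σ → ℝ} {c r : ℝ}
    (hw0 : ∀ x, 0 ≤ w x) (hr : 0 < r) {π : σ → ℝ} (hπ : π ∈ statSet q w c) :
    (truncSet w r).indicator π ∈ truncPolytope q w c r := by
  obtain ⟨hπ0, hπ1, hπQ, hwπ, hwπc⟩ := hπ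
  have hπs : Summable π := hπ1.summable
  have htail : ∑' x : ↥(truncSet w r)ᶜ, π x ≤ c / r :=
    tail_bound hr hπ0 hπs hwπ hw0 hwπc
  have hsplit : (∑' x : truncSet w r, π x) + ∑' x : ↥(truncSet w r)ᶜ, π x = 1 := by
    rw [Summable.tsum_add_tsum_compl (hπs.subtype _) (hπs.subtype _), hπ1.tsum_eq]
  have hindsum : ∑' x, (truncSet w r).indicator π x = ∑' x : truncSet w r, π x :=
    (tsum_subtype _ _).symm
  refine ⟨fun x => Set.indicator_nonneg (fun x _ => hπ0 x) x,
    fun x hx => Set.indicator_of_notMem (show x ∉ truncSet w r from hx) _, ?_, ?_, ?_, ?_⟩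
  · intro x hx
    have heq : (fun y => (truncSet w r).indicator π y * q y x) = fun y => π y * q y x := by
      funext y
      by_cases hy : y ∈ truncSet w r
      · rw [Set.indicator_of_mem hy]
      · rw [Set.indicator_of_notMem hy]
        have hq : q y x = 0 := by
          by_contra h
          exact hy (hx.2 y h)
        simp [hq]
    rw [heq, (hπQ x).tsum_eq]
  · rw [hindsum]
    have h0 : 0 ≤ ∑' x : ↥(truncSet w r)ᶜ, π x := tsum_subtype_nonneg hπ0 _
    linarith
  · rw [hindsum]
    have h0 : 0 ≤ ∑' x : ↥(truncSet w r)ᶜ, π x := tsum_subtype_nonneg hπ0 _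
    linarith
  · have heq : (fun x => w x * (truncSet w r).indicator π x)
        = (truncSet w r).indicator (fun x => w x * π x) := by
      funext x
      by_cases hx : x ∈ truncSet w r <;>
        simp [Set.indicator_of_mem, Set.indicator_of_notMem, hx]
    rw [heq]
    refine (Summable.tsum_le_tsum (fun x => Set.indicator_le_self'
      (fun x _ => mul_nonneg (hw0 x) (hπ0 x)) x) (hwπ.indicator _) hwπ).trans hwπc

/-- the index set I_r is finite -/
lemma Ir_finite {A : ι → Set σ} (hdisj : ∀ i j, i ≠ j → Disjoint (A i) (A j))
    {w : σ → ℝ} {r : ℝ} (hw_norm : (truncSet w r).Finite) :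
    {i : ι | (A i ∩ truncSet w r).Nonempty}.Finite := by
  rcases Set.eq_empty_or_nonempty {i : ι | (A i ∩ truncSet w r).Nonempty} with h | h
  · rw [h]; exact Set.finite_empty
  obtain ⟨i0, hi0⟩ := h
  obtain ⟨x0, _⟩ := hi0
  set f : ι → σ := fun i => if h : (A i ∩ truncSet w r).Nonempty then h.choose else x0 with hf
  have hfmem : ∀ i, (A i ∩ truncSet w r).Nonempty → f i ∈ A i ∩ truncSet w r := by
    intro i hi
    simp only [hf, dif_pos hi]
    exact hi.choose_spec
  refine Set.Finite.of_finite_image (f := f) (hw_norm.subset ?_) ?_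
  · rintro y ⟨i, hi, rfl⟩
    exact (hfmem i hi).2
  · intro i hi j hj hij
    by_contra hne
    exact Set.disjoint_left.mp (hdisj i j hne) (hfmem i hi).1 (hij ▸ (hfmem j hj).1)

end Helpers2

section PartI

variable {σ : Type*} {ι : Type*}

lemma part_i (q : σ → σ → ℝ) (w : σ → ℝ) (hw0 : ∀ x, 0 ≤ w x)
    (hw_norm : ∀ r : ℝ, (truncSet w r).Finite) (c : ℝ)
    (A : ι → Set σ) (hdisj : ∀ i j, i ≠ j → Disjoint (A i) (A j))
    (hcov : (⋃ i, A i) = Set.univ)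
    (lhat uhat : ℕ → ι → ℝ)
    (hlhat : ∀ r : ℕ, lhat r =
      ({i : ι | (A i ∩ truncSet w (r : ℝ)).Nonempty}).indicator fun i =>
        sInf {t : ℝ | ∃ ρ ∈ truncPolytope q w c (r : ℝ), t = ∑' x : A i, ρ x})
    (huhat : ∀ r : ℕ, uhat r =
      ({i : ι | (A i ∩ truncSet w (r : ℝ)).Nonempty}).indicator fun i =>
        sSup {t : ℝ | ∃ ρ ∈ truncPolytope q w c (r : ℝ), t = ∑' x : A i, ρ x})
    (π : σ → ℝ) (hπ : π ∈ statSet q w c) (r : ℕ) (hr : 1 ≤ r) :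
    (∀ i : ι, lhat r i ≤ ∑' x : A i, π x) ∧
      tvDist (lhat r) (fun i => ∑' x : A i, π x) = 1 - ∑' i, lhat r i ∧
      tvDist (uhat r) (fun i => ∑' x : A i, π x) ≤
        max ((∑' i, uhat r i) - 1 + ∑' x : ↥(truncSet w (r : ℝ))ᶜ, π x)
          (∑' x : ↥(truncSet w (r : ℝ))ᶜ, π x) ∧
      max ((∑' i, uhat r i) - 1 + ∑' x : ↥(truncSet w (r : ℝ))ᶜ, π x)
          (∑' x : ↥(truncSet w (r : ℝ))ᶜ, π x) ≤
        max ((∑' i, uhat r i) - 1 + c / r) (c / r) := by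
  have hrpos : (0 : ℝ) < (r : ℝ) := by exact_mod_cast hr
  obtain ⟨hπ0, hπ1, hπQ, hwπ, hwπc⟩ := hπ
  have hπmem : π ∈ statSet q w c := ⟨hπ0, hπ1, hπQ, hwπ, hwπc⟩
  have hπs : Summable π := hπ1.summable
  set S : Set σ := truncSet w (r : ℝ) with hSdef
  have hS : S.Finite := hw_norm _
  have hind : S.indicator π ∈ truncPolytope q w c (r : ℝ) :=
    indicator_mem_truncPolytope hw0 hrpos hπmem
  set Ir : Set ι := {i : ι | (A i ∩ S).Nonempty} with hIrdef
  have hIr : Ir.Finite := Ir_finite hdisj hS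
  set V : ι → Set ℝ :=
    fun i => {t : ℝ | ∃ ρ ∈ truncPolytope q w c (r : ℝ), t = ∑' x : A i, ρ x} with hVdef
  have hVbddA : ∀ i, BddAbove (V i) := fun i =>
    ⟨1, by rintro t ⟨ρ, hρ, rfl⟩; exact truncPolytope_mass_le_one hS hρ _⟩
  have hVbddB : ∀ i, BddBelow (V i) := fun i =>
    ⟨0, by rintro t ⟨ρ, hρ, rfl⟩; exact tsum_subtype_nonneg hρ.1 _⟩
  set μ : ι → ℝ := fun i => ∑' x : A i, (S.indicator π) x with hμdef
  set g : ι → ℝ := fun i => ∑' x : A i, ((Sᶜ).indicator π) x with hgdef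
  have hμmem : ∀ i, μ i ∈ V i := fun i => ⟨S.indicator π, hind, rfl⟩
  have hVne : ∀ i, (V i).Nonempty := fun i => ⟨μ i, hμmem i⟩
  have hμ0 : ∀ i, 0 ≤ μ i := fun i =>
    tsum_subtype_nonneg (Set.indicator_nonneg fun x _ => hπ0 x) _
  have hg0 : ∀ i, 0 ≤ g i := fun i =>
    tsum_subtype_nonneg (Set.indicator_nonneg fun x _ => hπ0 x) _
  -- marginal splits: π̂ i = μ i + g i
  have hsplit : ∀ i, (∑' x : A i, π x) = μ i + g i := by
    intro i
    have h1 : Summable (fun x : A i => S.indicator π x) := (hπs.indicator S).subtype _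
    have h2 : Summable (fun x : A i => Sᶜ.indicator π x) := (hπs.indicator Sᶜ).subtype _
    have h3 : (∑' x : A i, (S.indicator π x + Sᶜ.indicator π x)) = μ i + g i := Summable.tsum_add h1 h2
    rw [← h3]
    refine tsum_congr fun x => ?_
    by_cases hx : (x : σ) ∈ S
    · rw [Set.indicator_of_mem hx, Set.indicator_of_notMem (Set.notMem_compl_iff.mpr hx), add_zero]
    · rw [Set.indicator_of_notMem hx, Set.indicator_of_mem (Set.mem_compl hx), zero_add]
  -- total mass of g is m_r
  set m : ℝ := ∑' x : ↥Sᶜ, π x with hmdef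
  have hg : HasSum g m := by
    have := partition_hasSum hdisj hcov (hπs.indicator Sᶜ)
    rwa [← tsum_subtype] at this
  have hm0 : 0 ≤ m := tsum_subtype_nonneg hπ0 _
  have hmc : m ≤ c / r := tail_bound hrpos hπ0 hπs hwπ hw0 hwπc
  -- marginal of π has sum 1
  have hπhat : HasSum (fun i => ∑' x : A i, π x) 1 := by
    have := partition_hasSum hdisj hcov hπs
    rwa [hπ1.tsum_eq] at this
  -- basic bounds on lhat and uhat
  have hlh : ∀ i, lhat r i ≤ μ i := by
    intro i
    rw [hlhat r]
    by_cases hi : i ∈ Ir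
    · rw [Set.indicator_of_mem hi]
      exact csInf_le (hVbddB i) (hμmem i)
    · rw [Set.indicator_of_notMem hi]
      exact hμ0 i
  have hlh0 : ∀ i, 0 ≤ lhat r i := by
    intro i
    rw [hlhat r]
    by_cases hi : i ∈ Ir
    · rw [Set.indicator_of_mem hi]
      exact le_csInf (hVne i) (by rintro t ⟨ρ, hρ, rfl⟩; exact tsum_subtype_nonneg hρ.1 _)
    · rw [Set.indicator_of_notMem hi]
  have huh : ∀ i, μ i ≤ uhat r i := by
    intro i
    rw [huhat r]
    by_cases hi : i ∈ Ir
    · rw [Set.indicator_of_mem hi]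
      exact le_csSup (hVbddA i) (hμmem i)
    · rw [Set.indicator_of_notMem hi]
      have hz : ∀ x : A i, (S.indicator π) x = 0 := by
        rintro ⟨x, hx⟩
        refine Set.indicator_of_notMem (fun hxS => hi ⟨x, hx, hxS⟩) _
      rw [hμdef]
      simp only
      rw [tsum_congr hz, tsum_zero]
  -- summability of lhat and uhat
  have hlsum : Summable (lhat r) := by
    refine summable_of_ne_finset_zero (s := hIr.toFinset) fun i hi => ?_
    rw [Set.Finite.mem_toFinset] at hi
    rw [hlhat r]
    exact Set.indicator_of_notMem hi _
  have husum : Summable (uhat r) := by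
    refine summable_of_ne_finset_zero (s := hIr.toFinset) fun i hi => ?_
    rw [Set.Finite.mem_toFinset] at hi
    rw [huhat r]
    exact Set.indicator_of_notMem hi _
  -- (a)
  have ha : ∀ i : ι, lhat r i ≤ ∑' x : A i, π x := fun i => by
    rw [hsplit i]; exact (hlh i).trans (le_add_of_nonneg_right (hg0 i))
  refine ⟨ha, ?_, ?_, ?_⟩
  · -- (b)
    set L : ℝ := ∑' i, lhat r i with hLdef
    have hL1 : L ≤ 1 := by
      have := Summable.tsum_le_tsum ha hlsum hπhat.summable
      rwa [hπhat.tsum_eq] at this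
    have hdsum : Summable (fun i => lhat r i - (∑' x : A i, π x)) :=
      hlsum.sub hπhat.summable
    have hbound : ∀ B : Set ι,
        |∑' i : B, (lhat r i - ∑' x : A i, π x)| ≤ 1 - L := by
      intro B
      have h1 : ∑' i : B, (lhat r i - ∑' x : A i, π x)
          = -∑' i : B, ((∑' x : A i, π x) - lhat r i) := by
        rw [← tsum_neg]
        exact tsum_congr fun i => by ring
      rw [h1, abs_neg, abs_of_nonneg (tsum_nonneg fun i : B => sub_nonneg.mpr (ha i.1))]
      have h2 : ∑' i : B, ((∑' x : A i, π x) - lhat r i)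
          ≤ ∑' i, ((∑' x : A i, π x) - lhat r i) :=
        tsum_subtype_le' (fun i => sub_nonneg.mpr (ha i)) (hπhat.summable.sub hlsum) _
      rw [Summable.tsum_sub hπhat.summable hlsum, hπhat.tsum_eq] at h2
      exact h2
    have huniv : |∑' i : (Set.univ : Set ι), (lhat r i - ∑' x : A i, π x)| = 1 - L := by
      rw [tsum_univ (fun i => lhat r i - ∑' x : A i, π x),
        Summable.tsum_sub hlsum hπhat.summable, hπhat.tsum_eq, abs_sub_comm,
        abs_of_nonneg (by linarith)]
    refine le_antisymm (ciSup_le hbound) ?_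
    rw [← huniv]
    exact le_ciSup ⟨1 - L, by rintro t ⟨B, rfl⟩; exact hbound B⟩ Set.univ
  · -- (c)
    set U : ℝ := ∑' i, uhat r i with hUdef
    have hkey : ∀ i, (∑' x : A i, π x) - uhat r i ≤ g i := by
      intro i
      rw [hsplit i]
      have := huh i
      linarith
    have hdsum : Summable (fun i => uhat r i - (∑' x : A i, π x)) :=
      husum.sub hπhat.summable
    have htot : ∑' i, (uhat r i - ∑' x : A i, π x) = U - 1 := by
      rw [Summable.tsum_sub husum hπhat.summable, hπhat.tsum_eq]
    have hlow : ∀ B : Set ι, -m ≤ ∑' i : B, (uhat r i - ∑' x : A i, π x) := by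
      intro B
      have h1 : ∑' i : B, (-(g i)) ≤ ∑' i : B, (uhat r i - ∑' x : A i, π x) := by
        refine Summable.tsum_le_tsum (fun i => ?_) ((hg.summable.neg).subtype _) (hdsum.subtype _)
        have := hkey i.1
        linarith
      have h2 : ∑' i : B, g i ≤ m := by
        have := tsum_subtype_le' (fun i => hg0 i) hg.summable B
        rwa [hg.tsum_eq] at this
      rw [tsum_neg] at h1
      linarith
    have hbound : ∀ B : Set ι,
        |∑' i : B, (uhat r i - ∑' x : A i, π x)| ≤ max (U - 1 + m) m := by
      intro B
      have hcompl := Summable.tsum_add_tsum_compl (f := fun i => uhat r i - ∑' x : A i, π x)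
        (hdsum.subtype B) (hdsum.subtype Bᶜ)
      rw [htot] at hcompl
      have hup : ∑' i : B, (uhat r i - ∑' x : A i, π x) ≤ U - 1 + m := by
        have := hlow Bᶜ
        linarith
      refine abs_le.mpr ⟨?_, hup.trans (le_max_left _ _)⟩
      have := hlow B
      have hm' : m ≤ max (U - 1 + m) m := le_max_right _ _
      linarith
    exact ciSup_le hbound
  · -- (d)
    exact max_le_max (by linarith) hmc

end PartI

section KeyLemma

variable {σ : Type*} [Countable σ]

/-- Key compactness lemma: members of the truncated polytopes converge pointwise,
uniformly over the polytope, to the unique stationary distribution. -/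
lemma key_pointwise (q : σ → σ → ℝ) (hq_fin : ∀ x : σ, {z : σ | q z x ≠ 0}.Finite)
    (w : σ → ℝ) (hw0 : ∀ x, 0 ≤ w x) (hw_norm : ∀ r : ℝ, (truncSet w r).Finite)
    (c : ℝ) {π : σ → ℝ} (hstat : statSet q w c = {π})
    (x : σ) {ε : ℝ} (hε : 0 < ε) :
    ∃ R : ℕ, ∀ r : ℕ, R ≤ r → ∀ ρ ∈ truncPolytope q w c (r : ℝ), |ρ x - π x| ≤ ε := by
  have hπ : π ∈ statSet q w c := by rw [hstat]; exact rfl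
  have hc : 0 ≤ c := statSet_c_nonneg hw0 hπ
  by_contra hcon
  push_neg at hcon
  choose rr hrr ρ hρ hfar using hcon
  -- the sequence lives in the compact set K
  set K : Set (σ → ℝ) := Set.univ.pi (fun _ : σ => Set.Icc (0:ℝ) 1) with hK
  have hKc : IsCompact K := isCompact_univ_pi fun _ => isCompact_Icc
  have hmem : ∀ k : ℕ, ρ k ∈ K := by
    intro k
    rw [Set.mem_univ_pi]
    intro y
    refine ⟨(hρ k).1 y, ?_⟩
    refine le_trans (Summable.le_tsum (truncPolytope_summable (hw_norm _) (hρ k)) y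
      (fun z _ => (hρ k).1 z)) (hρ k).2.2.2.2.1
  obtain ⟨ρL, hρLK, φ, hφ, hφt⟩ := hKc.isSeqCompact hmem
  have hpt : ∀ y, Tendsto (fun k => ρ (φ k) y) atTop (nhds (ρL y)) := by
    intro y
    exact (tendsto_pi_nhds.mp hφt) y
  have hρL0 : ∀ y, 0 ≤ ρL y := fun y => ((Set.mem_univ_pi.mp hρLK) y).1
  have hrge : ∀ k : ℕ, (k : ℝ) ≤ (rr (φ k) : ℝ) := by
    intro k
    exact_mod_cast le_trans (hφ.le_apply) (hrr (φ k))
  -- finite sums of the limit are bounded by 1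
  have hfin1 : ∀ F : Finset σ, ∑ y ∈ F, ρL y ≤ 1 := by
    intro F
    have hconv : Tendsto (fun k => ∑ y ∈ F, ρ (φ k) y) atTop (nhds (∑ y ∈ F, ρL y)) :=
      tendsto_finset_sum F fun y _ => hpt y
    refine le_of_tendsto hconv (Eventually.of_forall fun k => ?_)
    exact le_trans (Summable.sum_le_tsum F (fun y _ => (hρ (φ k)).1 y)
      (truncPolytope_summable (hw_norm _) (hρ (φ k)))) (hρ (φ k)).2.2.2.2.1
  -- c / r term tends to zero along the subsequence
  have hczero : Tendsto (fun k : ℕ => c / (rr (φ k) : ℝ)) atTop (nhds 0) := by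
    have h1 : Tendsto (fun k : ℕ => c / (k : ℝ)) atTop (nhds 0) :=
      tendsto_const_div_atTop_nhds_zero_nat c
    refine tendsto_of_tendsto_of_tendsto_of_le_of_le' tendsto_const_nhds h1 ?_ ?_
    · filter_upwards [eventually_ge_atTop 1] with k hk
      have : (0:ℝ) < (rr (φ k) : ℝ) := lt_of_lt_of_le (by exact_mod_cast hk) (hrge k)
      positivity
    · filter_upwards [eventually_ge_atTop 1] with k hk
      have hk' : (0:ℝ) < (k : ℝ) := by exact_mod_cast hk
      exact div_le_div_of_nonneg_left hc hk' (hrge k)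
  -- lower bound on sums over truncation sets
  have hfin2 : ∀ m : ℕ, 1 ≤ m → 1 - c / m ≤ ∑ y ∈ (hw_norm (m:ℝ)).toFinset, ρL y := by
    intro m hm
    have hmpos : (0:ℝ) < (m:ℝ) := by exact_mod_cast hm
    have hconv : Tendsto (fun k => ∑ y ∈ (hw_norm (m:ℝ)).toFinset, ρ (φ k) y) atTop
        (nhds (∑ y ∈ (hw_norm (m:ℝ)).toFinset, ρL y)) :=
      tendsto_finset_sum _ fun y _ => hpt y
    have hconv2 : Tendsto
        (fun k => (∑ y ∈ (hw_norm (m:ℝ)).toFinset, ρ (φ k) y) + c / (rr (φ k) : ℝ)) atTop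
        (nhds ((∑ y ∈ (hw_norm (m:ℝ)).toFinset, ρL y) + 0)) := hconv.add hczero
    rw [add_zero] at hconv2
    refine le_of_tendsto_of_tendsto' tendsto_const_nhds hconv2 fun k => ?_
    -- 1 - c/m ≤ ∑_{S_m} ρ_k + c / rr(φ k)
    set ρk := ρ (φ k) with hρk
    have hρkP := hρ (φ k)
    have hsum : Summable ρk := truncPolytope_summable (hw_norm _) hρkP
    have hsplit : (∑' y : truncSet w (m:ℝ), ρk y) + ∑' y : ↥(truncSet w (m:ℝ))ᶜ, ρk y
        = ∑' y, ρk y := Summable.tsum_add_tsum_compl (hsum.subtype _) (hsum.subtype _)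
    have htail : ∑' y : ↥(truncSet w (m:ℝ))ᶜ, ρk y ≤ c / m :=
      truncPolytope_tail hmpos hw0 (hw_norm _) hρkP
    have hlow : 1 - c / (rr (φ k) : ℝ) ≤ ∑' y, ρk y := hρkP.2.2.2.1
    have heq : ∑' y : truncSet w (m:ℝ), ρk y = ∑ y ∈ (hw_norm (m:ℝ)).toFinset, ρk y := by
      rw [tsum_subtype]
      rw [tsum_eq_sum (s := (hw_norm (m:ℝ)).toFinset)
        (fun b hb => Set.indicator_of_notMem (by simpa using hb) ρk)]
      exact Finset.sum_congr rfl fun y hy => Set.indicator_of_mem (by simpa using hy) ρk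
    rw [← heq]
    linarith
  -- the limit is a stationary distribution
  have hρLstat : ρL ∈ statSet q w c := by
    refine ⟨hρL0, ?_, ?_, ?_, ?_⟩
    · -- HasSum ρL 1
      refine hasSum_of_isLUB_of_nonneg 1 hρL0 ⟨?_, ?_⟩
      · rintro t ⟨F, rfl⟩
        exact hfin1 F
      · intro b hb
        have hlim : Tendsto (fun m : ℕ => 1 - c / (m:ℝ)) atTop (nhds (1 - 0)) :=
          tendsto_const_nhds.sub (tendsto_const_div_atTop_nhds_zero_nat c)
        rw [sub_zero] at hlim
        refine le_of_tendsto hlim ?_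
        filter_upwards [eventually_ge_atTop 1] with m hm
        exact le_trans (hfin2 m hm) (hb ⟨(hw_norm (m:ℝ)).toFinset, rfl⟩)
    · -- stationarity
      intro x0
      obtain ⟨M, hM⟩ := exists_nat_gt ((insert x0 (hq_fin x0).toFinset).sup' (by simp) w)
      have hMgt : ∀ z ∈ insert x0 (hq_fin x0).toFinset, w z < (M:ℝ) := by
        intro z hz
        exact lt_of_le_of_lt (Finset.le_sup' w hz) hM
      have hzero : ∀ᶠ k in atTop, ∑ z ∈ (hq_fin x0).toFinset, ρ (φ k) z * q z x0 = 0 := by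
        filter_upwards [eventually_ge_atTop M] with k hk
        have hrk : (M:ℝ) ≤ (rr (φ k) : ℝ) := le_trans (by exact_mod_cast hk) (hrge k)
        have hx0 : x0 ∈ eqStates q w ((rr (φ k) : ℕ) : ℝ) := by
          constructor
          · exact lt_of_lt_of_le (hMgt x0 (Finset.mem_insert_self _ _)) hrk
          · intro z hz
            refine lt_of_lt_of_le (hMgt z ?_) hrk
            exact Finset.mem_insert_of_mem ((hq_fin x0).mem_toFinset.mpr hz)
        have h0 := (hρ (φ k)).2.2.1 x0 hx0
        have heq : (∑' y, ρ (φ k) y * q y x0)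
            = ∑ z ∈ (hq_fin x0).toFinset, ρ (φ k) z * q z x0 := by
          refine tsum_eq_sum fun z hz => ?_
          have hq0 : q z x0 = 0 := by
            by_contra hq
            exact hz (((hq_fin x0).mem_toFinset).mpr hq)
          rw [hq0, mul_zero]
        rw [← heq]
        exact h0
      have hconv : Tendsto (fun k => ∑ z ∈ (hq_fin x0).toFinset, ρ (φ k) z * q z x0) atTop
          (nhds (∑ z ∈ (hq_fin x0).toFinset, ρL z * q z x0)) :=
        tendsto_finset_sum _ fun z _ => (hpt z).mul_const (q z x0)
      have hL0 : ∑ z ∈ (hq_fin x0).toFinset, ρL z * q z x0 = 0 := by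
        have h2 : Tendsto (fun _ : ℕ => (0:ℝ)) atTop
            (nhds (∑ z ∈ (hq_fin x0).toFinset, ρL z * q z x0)) :=
          hconv.congr' (hzero.mono fun k hk => hk)
        exact (tendsto_nhds_unique h2 tendsto_const_nhds)
      have := hasSum_sum_of_ne_finset_zero (s := (hq_fin x0).toFinset)
        (f := fun z => ρL z * q z x0) (L := SummationFilter.unconditional σ) (fun z hz => by
          have hq0 : q z x0 = 0 := by
            by_contra hq
            exact hz (((hq_fin x0).mem_toFinset).mpr hq)
          show ρL z * q z x0 = 0
          rw [hq0, mul_zero])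
      rwa [hL0] at this
    · -- Summable w ρL
      refine summable_of_sum_le (c := c) (fun y => mul_nonneg (hw0 y) (hρL0 y)) ?_
      intro F
      have hconv : Tendsto (fun k => ∑ y ∈ F, w y * ρ (φ k) y) atTop
          (nhds (∑ y ∈ F, w y * ρL y)) :=
        tendsto_finset_sum F fun y _ => ((hpt y).const_mul (w y))
      refine le_of_tendsto hconv (Eventually.of_forall fun k => ?_)
      exact le_trans (Summable.sum_le_tsum F (fun y _ => mul_nonneg (hw0 y) ((hρ (φ k)).1 y))
        (truncPolytope_summable_mul (hw_norm _) (hρ (φ k)) w)) (hρ (φ k)).2.2.2.2.2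
    · -- tsum w ρL ≤ c
      refine Summable.tsum_le_of_sum_le ?_ ?_
      · refine summable_of_sum_le (c := c) (fun y => mul_nonneg (hw0 y) (hρL0 y)) ?_
        intro F
        have hconv : Tendsto (fun k => ∑ y ∈ F, w y * ρ (φ k) y) atTop
            (nhds (∑ y ∈ F, w y * ρL y)) :=
          tendsto_finset_sum F fun y _ => ((hpt y).const_mul (w y))
        refine le_of_tendsto hconv (Eventually.of_forall fun k => ?_)
        exact le_trans (Summable.sum_le_tsum F (fun y _ => mul_nonneg (hw0 y) ((hρ (φ k)).1 y))
          (truncPolytope_summable_mul (hw_norm _) (hρ (φ k)) w)) (hρ (φ k)).2.2.2.2.2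
      · intro F
        have hconv : Tendsto (fun k => ∑ y ∈ F, w y * ρ (φ k) y) atTop
            (nhds (∑ y ∈ F, w y * ρL y)) :=
          tendsto_finset_sum F fun y _ => ((hpt y).const_mul (w y))
        refine le_of_tendsto hconv (Eventually.of_forall fun k => ?_)
        exact le_trans (Summable.sum_le_tsum F (fun y _ => mul_nonneg (hw0 y) ((hρ (φ k)).1 y))
          (truncPolytope_summable_mul (hw_norm _) (hρ (φ k)) w)) (hρ (φ k)).2.2.2.2.2
  have hρLπ : ρL = π := by
    have : ρL ∈ ({π} : Set (σ → ℝ)) := hstat ▸ hρLstat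
    exact this
  -- contradiction
  have hx := hpt x
  rw [hρLπ] at hx
  have := (Metric.tendsto_atTop.mp hx) ε hε
  obtain ⟨N, hN⟩ := this
  have h1 := hN N le_rfl
  rw [Real.dist_eq] at h1
  exact absurd h1 (not_lt.mpr (le_of_lt (hfar (φ N))))

end KeyLemma

section MoreHelpers

variable {σ : Type*} {ι : Type*}

lemma finsetSum_le_tsum_subtype {f : σ → ℝ} (hf0 : ∀ x, 0 ≤ f x) {s : Set σ}
    (hfs : Summable (s.indicator f)) {t : Finset σ} (hts : ↑t ⊆ s) :
    ∑ x ∈ t, f x ≤ ∑' x : s, f x := by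
  rw [tsum_subtype]
  have heq : ∑ x ∈ t, f x = ∑ x ∈ t, s.indicator f x :=
    Finset.sum_congr rfl fun x hx => (Set.indicator_of_mem (hts hx) f).symm
  rw [heq]
  exact Summable.sum_le_tsum t (fun x _ => Set.indicator_nonneg (fun y _ => hf0 y) x) hfs

lemma tsum_subtype_eq_sum {f : σ → ℝ} {s : Set σ} (hs : s.Finite) :
    ∑' x : s, f x = ∑ x ∈ hs.toFinset, f x := by
  rw [tsum_subtype]
  rw [tsum_eq_sum (s := hs.toFinset)
    (fun b hb => Set.indicator_of_notMem (by simpa using hb) f)]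
  exact Finset.sum_congr rfl fun x hx => Set.indicator_of_mem (by simpa using hx) f

lemma tsum_subtype_split {f : σ → ℝ} (hf : Summable f) (s T : Set σ) :
    ∑' x : T, f x = (∑' x : T, (s.indicator f) x) + ∑' x : T, ((sᶜ).indicator f) x := by
  have h1 : Summable (fun x : T => s.indicator f x) := (hf.indicator s).subtype _
  have h2 : Summable (fun x : T => (sᶜ).indicator f x) := (hf.indicator sᶜ).subtype _
  have h3 : (∑' x : T, (s.indicator f x + (sᶜ).indicator f x))
      = (∑' x : T, (s.indicator f) x) + ∑' x : T, ((sᶜ).indicator f) x := Summable.tsum_add h1 h2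
  rw [← h3]
  refine tsum_congr fun x => ?_
  by_cases hx : (x : σ) ∈ s
  · rw [Set.indicator_of_mem hx, Set.indicator_of_notMem (Set.notMem_compl_iff.mpr hx),
      add_zero]
  · rw [Set.indicator_of_notMem hx, Set.indicator_of_mem (Set.mem_compl hx), zero_add]

lemma tsum_subtype_indicator_le {f : σ → ℝ} (hf0 : ∀ x, 0 ≤ f x) (hf : Summable f)
    (s T : Set σ) : ∑' x : T, (s.indicator f) x ≤ ∑' x : s, f x := by
  have h1 : ∑' x : T, (s.indicator f) x ≤ ∑' x, s.indicator f x :=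
    tsum_subtype_le' (fun x => Set.indicator_nonneg (fun y _ => hf0 y) x) (hf.indicator s) T
  rwa [← tsum_subtype] at h1

lemma tsum_subtype_indicator_eq (f : σ → ℝ) (s T : Set σ) :
    ∑' x : T, (s.indicator f) x = ∑' x : ↥(T ∩ s), f x := by
  rw [tsum_subtype, tsum_subtype, Set.indicator_indicator]

lemma exists_nat_bound {c ε b : ℝ} (hc : 0 ≤ c) (hε : 0 < ε) :
    ∃ m : ℕ, 1 ≤ m ∧ c / m < ε ∧ b < m := by
  obtain ⟨m, hm⟩ := exists_nat_gt (max (max 1 (c / ε)) b)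
  have h1 : (1:ℝ) < m := lt_of_le_of_lt (le_max_of_le_left (le_max_left _ _)) hm
  have h2 : c / ε < m := lt_of_le_of_lt (le_max_of_le_left (le_max_right _ _)) hm
  have h3 : b < m := lt_of_le_of_lt (le_max_right _ _) hm
  have hm0 : (0:ℝ) < m := lt_trans one_pos h1
  refine ⟨m, by exact_mod_cast h1.le, ?_, h3⟩
  rw [div_lt_iff₀ hm0]
  have := (div_lt_iff₀ hε).mp h2
  linarith [mul_comm (m:ℝ) ε]

end MoreHelpers

section PartII

variable {σ : Type*} [Countable σ] {ι : Type*}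

lemma part_ii (q : σ → σ → ℝ) (hq_fin : ∀ x : σ, {z : σ | q z x ≠ 0}.Finite)
    (w : σ → ℝ) (hw0 : ∀ x, 0 ≤ w x) (hw_norm : ∀ r : ℝ, (truncSet w r).Finite)
    (c : ℝ)
    (A : ι → Set σ) (hdisj : ∀ i j, i ≠ j → Disjoint (A i) (A j))
    (hcov : (⋃ i, A i) = Set.univ)
    (lhat uhat : ℕ → ι → ℝ)
    (hlhat : ∀ r : ℕ, lhat r =
      ({i : ι | (A i ∩ truncSet w (r : ℝ)).Nonempty}).indicator fun i =>
        sInf {t : ℝ | ∃ ρ ∈ truncPolytope q w c (r : ℝ), t = ∑' x : A i, ρ x})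
    (huhat : ∀ r : ℕ, uhat r =
      ({i : ι | (A i ∩ truncSet w (r : ℝ)).Nonempty}).indicator fun i =>
        sSup {t : ℝ | ∃ ρ ∈ truncPolytope q w c (r : ℝ), t = ∑' x : A i, ρ x})
    (π : σ → ℝ) (hstat : statSet q w c = {π}) :
    (∀ i : ι, Tendsto (fun r : ℕ => uhat r i) atTop (nhds (∑' x : A i, π x))) ∧
      Tendsto (fun r : ℕ => tvDist (lhat r) (fun i => ∑' x : A i, π x)) atTop (nhds 0) := by
  have hπ : π ∈ statSet q w c := by rw [hstat]; exact rfl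
  obtain ⟨hπ0, hπ1, hπQ, hwπ, hwπc⟩ := hπ
  have hπmem : π ∈ statSet q w c := ⟨hπ0, hπ1, hπQ, hwπ, hwπc⟩
  have hπs : Summable π := hπ1.summable
  have hc : 0 ≤ c := statSet_c_nonneg hw0 hπmem
  have hπhat : HasSum (fun i => ∑' x : A i, π x) 1 := by
    have := partition_hasSum hdisj hcov hπs
    rwa [hπ1.tsum_eq] at this
  -- notation
  set V : ℝ → ι → Set ℝ := fun r i =>
    {t : ℝ | ∃ ρ ∈ truncPolytope q w c r, t = ∑' x : A i, ρ x} with hVdef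
  have hVbddA : ∀ (r : ℝ), ∀ i, BddAbove (V r i) := fun r i =>
    ⟨1, by rintro t ⟨ρ, hρ, rfl⟩; exact truncPolytope_mass_le_one (hw_norm r) hρ _⟩
  have hVbddB : ∀ (r : ℝ), ∀ i, BddBelow (V r i) := fun r i =>
    ⟨0, by rintro t ⟨ρ, hρ, rfl⟩; exact tsum_subtype_nonneg hρ.1 _⟩
  have hVmem : ∀ (r : ℝ), 0 < r → ∀ i,
      (∑' x : A i, ((truncSet w r).indicator π) x) ∈ V r i := fun r hr i =>
    ⟨(truncSet w r).indicator π, indicator_mem_truncPolytope hw0 hr hπmem, rfl⟩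
  have hVne : ∀ (r : ℝ), 0 < r → ∀ i, (V r i).Nonempty := fun r hr i => ⟨_, hVmem r hr i⟩
  -- lower bound for uhat in terms of the truncated marginal
  have hulow : ∀ (r : ℕ), 0 < r → ∀ i, i ∈ {i : ι | (A i ∩ truncSet w (r:ℝ)).Nonempty} →
      (∑' x : A i, π x) - c / r ≤ uhat r i := by
    intro r hr i hi
    have hrpos : (0:ℝ) < (r:ℝ) := by exact_mod_cast hr
    rw [huhat r, Set.indicator_of_mem hi]
    have h1 : (∑' x : A i, ((truncSet w (r:ℝ)).indicator π) x) ≤ sSup (V (r:ℝ) i) :=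
      le_csSup (hVbddA _ i) (hVmem _ hrpos i)
    have h2 := tsum_subtype_split hπs (truncSet w (r:ℝ)) (A i)
    have h3 : ∑' x : A i, (((truncSet w (r:ℝ))ᶜ).indicator π) x
        ≤ ∑' x : ↥(truncSet w (r:ℝ))ᶜ, π x :=
      tsum_subtype_indicator_le hπ0 hπs _ _
    have h4 : ∑' x : ↥(truncSet w (r:ℝ))ᶜ, π x ≤ c / r :=
      tail_bound hrpos hπ0 hπs hwπ hw0 hwπc
    have : sSup (V (r:ℝ) i) = sSup (V (r:ℝ) i) := rfl
    linarith
  constructor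
  · -- pointwise convergence of uhat
    intro i
    by_cases hAi : (A i).Nonempty
    swap
    · rw [Set.not_nonempty_iff_eq_empty] at hAi
      have h0 : (fun r : ℕ => uhat r i) = fun _ => 0 := by
        funext r
        rw [huhat r]
        refine Set.indicator_of_notMem ?_ _
        intro hmem
        rw [Set.mem_setOf_eq, hAi] at hmem
        simp at hmem
      have h1 : (∑' x : A i, π x) = 0 := by
        rw [hAi]
        exact tsum_empty
      rw [h0, h1]
      exact tendsto_const_nhds
    obtain ⟨x₀, hx₀⟩ := hAi
    rw [Metric.tendsto_atTop]
    intro ε hε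
    have hε4 : 0 < ε / 4 := by linarith
    obtain ⟨m, hm1, hmc, hmx⟩ := exists_nat_bound hc hε4 (b := w x₀)
    set F : Finset σ := (hw_norm (m:ℝ)).toFinset with hFdef
    set ε' : ℝ := ε / 4 / ((F.card : ℝ) + 1) with hε'def
    have hFpos : (0:ℝ) < (F.card : ℝ) + 1 := by positivity
    have hε'pos : 0 < ε' := by positivity
    have hcard : (F.card : ℝ) * ε' ≤ ε / 4 := by
      have h1 : (F.card : ℝ) * ε' ≤ ((F.card : ℝ) + 1) * ε' := by nlinarith
      have h2 : ((F.card : ℝ) + 1) * ε' = ε / 4 := by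
        rw [hε'def, mul_div_cancel₀]
        exact ne_of_gt hFpos
      linarith
    have hkey : ∀ x : σ, ∃ R : ℕ, ∀ r : ℕ, R ≤ r →
        ∀ ρ ∈ truncPolytope q w c (r : ℝ), |ρ x - π x| ≤ ε' := fun x =>
      key_pointwise q hq_fin w hw0 hw_norm c hstat x hε'pos
    choose Rf hRf using hkey
    refine ⟨max m (F.sup Rf), fun r hr => ?_⟩
    have hrm : m ≤ r := le_trans (le_max_left _ _) hr
    have hr1 : 1 ≤ r := le_trans hm1 hrm
    have hrpos : (0:ℝ) < (r:ℝ) := by exact_mod_cast hr1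
    have hmr : (m:ℝ) ≤ (r:ℝ) := by exact_mod_cast hrm
    have hiIr : i ∈ {i : ι | (A i ∩ truncSet w (r:ℝ)).Nonempty} :=
      ⟨x₀, hx₀, lt_of_lt_of_le hmx hmr⟩
    -- upper bound on uhat
    have hup : uhat r i ≤ (∑' x : A i, π x) + (c / m + (F.card : ℝ) * ε') := by
      rw [huhat r, Set.indicator_of_mem hiIr]
      refine csSup_le (hVne _ hrpos i) ?_
      rintro t ⟨ρ, hρP, rfl⟩
      have hρs : Summable ρ := truncPolytope_summable (hw_norm _) hρP
      have h1 := tsum_subtype_split hρs (truncSet w (m:ℝ)) (A i)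
      have h2 : ∑' x : A i, (((truncSet w (m:ℝ))ᶜ).indicator ρ) x ≤ c / m := by
        refine le_trans (tsum_subtype_indicator_le hρP.1 hρs _ _) ?_
        exact truncPolytope_tail (by exact_mod_cast hm1) hw0 (hw_norm _) hρP
      set G : Finset σ := ((hw_norm (m:ℝ)).inter_of_right (A i)).toFinset with hGdef
      have h3 : ∑' x : A i, ((truncSet w (m:ℝ)).indicator ρ) x = ∑ x ∈ G, ρ x := by
        rw [tsum_subtype_indicator_eq, tsum_subtype_eq_sum ((hw_norm (m:ℝ)).inter_of_right _)]
      have hGF : G ⊆ F := by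
        intro x hx
        rw [hGdef, Set.Finite.mem_toFinset] at hx
        rw [hFdef, Set.Finite.mem_toFinset]
        exact hx.2
      have h4 : ∑ x ∈ G, ρ x ≤ (∑ x ∈ G, π x) + (G.card : ℝ) * ε' := by
        have h5 : ∑ x ∈ G, ρ x ≤ ∑ x ∈ G, (π x + ε') := by
          refine Finset.sum_le_sum fun x hx => ?_
          have hxF : x ∈ F := hGF hx
          have := hRf x r (le_trans (le_trans (Finset.le_sup hxF) (le_max_right m _)) hr) ρ hρP
          have := (abs_le.mp this).2
          linarith
        rw [Finset.sum_add_distrib, Finset.sum_const, nsmul_eq_mul] at h5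
        exact h5
      have h6 : ∑ x ∈ G, π x ≤ ∑' x : A i, π x := by
        refine finsetSum_le_tsum_subtype hπ0 (hπs.indicator _) ?_
        intro x hx
        have hx' : x ∈ A i ∩ truncSet w (m:ℝ) := by simpa [hGdef] using hx
        exact hx'.1
      have h7 : (G.card : ℝ) * ε' ≤ (F.card : ℝ) * ε' := by
        have := Finset.card_le_card hGF
        have : (G.card : ℝ) ≤ (F.card : ℝ) := by exact_mod_cast this
        nlinarith
      linarith
    have hlo := hulow r hr1 i hiIr
    have hcr : c / r ≤ c / m := by
      refine div_le_div_of_nonneg_left hc ?_ hmr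
      exact_mod_cast hm1
    rw [Real.dist_eq]
    refine abs_lt.mpr ⟨by linarith, by linarith⟩
  · -- TV convergence of lhat
    rw [Metric.tendsto_atTop]
    intro ε hε
    have hε4 : 0 < ε / 4 := by linarith
    obtain ⟨m, hm1, hmc, -⟩ := exists_nat_bound hc hε4 (b := 0)
    set F : Finset σ := (hw_norm (m:ℝ)).toFinset with hFdef
    set ε' : ℝ := ε / 4 / ((F.card : ℝ) + 1) with hε'def
    have hFpos : (0:ℝ) < (F.card : ℝ) + 1 := by positivity
    have hε'pos : 0 < ε' := by positivity
    have hcard : (F.card : ℝ) * ε' ≤ ε / 4 := by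
      have h1 : (F.card : ℝ) * ε' ≤ ((F.card : ℝ) + 1) * ε' := by nlinarith
      have h2 : ((F.card : ℝ) + 1) * ε' = ε / 4 := by
        rw [hε'def, mul_div_cancel₀]
        exact ne_of_gt hFpos
      linarith
    have hkey : ∀ x : σ, ∃ R : ℕ, ∀ r : ℕ, R ≤ r →
        ∀ ρ ∈ truncPolytope q w c (r : ℝ), |ρ x - π x| ≤ ε' := fun x =>
      key_pointwise q hq_fin w hw0 hw_norm c hstat x hε'pos
    choose Rf hRf using hkey
    refine ⟨max m (F.sup Rf), fun r hr => ?_⟩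
    have hrm : m ≤ r := le_trans (le_max_left _ _) hr
    have hr1 : 1 ≤ r := le_trans hm1 hrm
    have hrpos : (0:ℝ) < (r:ℝ) := by exact_mod_cast hr1
    have hmr : (m:ℝ) ≤ (r:ℝ) := by exact_mod_cast hrm
    have hSmr : truncSet w (m:ℝ) ⊆ truncSet w (r:ℝ) := fun x hx => lt_of_lt_of_le hx hmr
    -- part (i) gives the exact TV formula
    have hpi := part_i q w hw0 hw_norm c A hdisj hcov lhat uhat hlhat huhat π hπmem r hr1
    rw [Real.dist_eq, sub_zero, hpi.2.1]
    -- summability of lhat r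
    have hIr : {i : ι | (A i ∩ truncSet w (r:ℝ)).Nonempty}.Finite :=
      Ir_finite hdisj (hw_norm _)
    set J : Finset ι := hIr.toFinset with hJdef
    have hlvanish : ∀ i ∉ J, lhat r i = 0 := by
      intro i hi
      rw [hJdef, Set.Finite.mem_toFinset] at hi
      rw [hlhat r]
      exact Set.indicator_of_notMem hi _
    have hlsum : Summable (lhat r) := summable_of_ne_finset_zero hlvanish
    have hL1 : (∑' i, lhat r i) ≤ 1 := by
      have := Summable.tsum_le_tsum (hpi.1) hlsum hπhat.summable
      rwa [hπhat.tsum_eq] at this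
    have hsum_l : (∑' i, lhat r i) = ∑ i ∈ J, lhat r i := tsum_eq_sum hlvanish
    -- the per-index finsets
    set G : ι → Finset σ := fun i => ((hw_norm (m:ℝ)).inter_of_right (A i)).toFinset
      with hGdef
    have hGA : ∀ i, ∀ x ∈ G i, x ∈ A i := by
      intro i x hx
      rw [hGdef, Set.Finite.mem_toFinset] at hx
      exact hx.1
    have hGS : ∀ i, ∀ x ∈ G i, x ∈ truncSet w (m:ℝ) := by
      intro i x hx
      rw [hGdef, Set.Finite.mem_toFinset] at hx
      exact hx.2
    have hGF : ∀ i, G i ⊆ F := by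
      intro i x hx
      rw [hFdef, Set.Finite.mem_toFinset]
      exact hGS i x hx
    -- lhat lower bound
    have hlbound : ∀ i ∈ J, (∑ x ∈ G i, (π x - ε')) ≤ lhat r i := by
      intro i hi
      rw [hJdef, Set.Finite.mem_toFinset] at hi
      rw [hlhat r, Set.indicator_of_mem hi]
      refine le_csInf (hVne _ hrpos i) ?_
      rintro t ⟨ρ, hρP, rfl⟩
      have hρs : Summable ρ := truncPolytope_summable (hw_norm _) hρP
      have h1 : ∑ x ∈ G i, ρ x ≤ ∑' x : A i, ρ x := by
        refine finsetSum_le_tsum_subtype hρP.1 (hρs.indicator _) ?_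
        intro x hx
        exact hGA i x (by simpa using hx)
      have h2 : ∑ x ∈ G i, (π x - ε') ≤ ∑ x ∈ G i, ρ x := by
        refine Finset.sum_le_sum fun x hx => ?_
        have hxF : x ∈ F := hGF i hx
        have := hRf x r (le_trans (le_trans (Finset.le_sup hxF) (le_max_right m _)) hr) ρ hρP
        have := (abs_le.mp this).1
        linarith
      linarith
    -- the union of the G i over J is exactly F
    have hdisjG : (↑J : Set ι).PairwiseDisjoint G := by
      intro i _ j _ hij
      simp only [Function.onFun]
      rw [Finset.disjoint_left]
      intro x hxi hxj
      exact Set.disjoint_left.mp (hdisj i j hij) (hGA i x hxi) (hGA j x hxj)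
    have hbiUnion : J.biUnion G = F := by
      apply Finset.Subset.antisymm
      · intro x hx
        obtain ⟨i, _, hxG⟩ := Finset.mem_biUnion.mp hx
        rw [hFdef, Set.Finite.mem_toFinset]
        exact hGS i x hxG
      · intro x hx
        rw [hFdef, Set.Finite.mem_toFinset] at hx
        have hxcov : x ∈ ⋃ i, A i := hcov ▸ Set.mem_univ x
        obtain ⟨i, hxA⟩ := Set.mem_iUnion.mp hxcov
        refine Finset.mem_biUnion.mpr ⟨i, ?_, ?_⟩
        · rw [hJdef, Set.Finite.mem_toFinset]
          exact ⟨x, hxA, hSmr hx⟩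
        · rw [hGdef, Set.Finite.mem_toFinset]
          exact ⟨hxA, hx⟩
    have hsum_ge : ∑ i ∈ J, lhat r i ≥ ∑ x ∈ F, (π x - ε') := by
      have h1 : ∑ x ∈ F, (π x - ε') = ∑ i ∈ J, ∑ x ∈ G i, (π x - ε') := by
        rw [← hbiUnion]
        exact Finset.sum_biUnion hdisjG
      rw [h1]
      exact Finset.sum_le_sum hlbound
    have hFsum : (1 : ℝ) - c / m ≤ ∑ x ∈ F, π x := by
      have hsplit : (∑' x : truncSet w (m:ℝ), π x) + ∑' x : ↥(truncSet w (m:ℝ))ᶜ, π x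
          = 1 := by
        rw [Summable.tsum_add_tsum_compl (hπs.subtype _) (hπs.subtype _), hπ1.tsum_eq]
      have htail : ∑' x : ↥(truncSet w (m:ℝ))ᶜ, π x ≤ c / m :=
        tail_bound (by exact_mod_cast hm1) hπ0 hπs hwπ hw0 hwπc
      have heq : ∑' x : truncSet w (m:ℝ), π x = ∑ x ∈ F, π x :=
        tsum_subtype_eq_sum (hw_norm (m:ℝ))
      linarith
    have hsub : ∑ x ∈ F, (π x - ε') = (∑ x ∈ F, π x) - (F.card : ℝ) * ε' := by
      rw [Finset.sum_sub_distrib, Finset.sum_const, nsmul_eq_mul]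
    have hfinal : 1 - ε / 2 ≤ ∑' i, lhat r i := by
      rw [hsum_l]
      have := hsum_ge
      rw [hsub] at this
      linarith
    have habs : |1 - ∑' i, lhat r i| = 1 - ∑' i, lhat r i := abs_of_nonneg (by linarith)
    rw [habs]
    linarith

end PartII

/-- corollary on marginal distribution bounds.
For a partition `{A_i}_{i ∈ I}` of `S` into pairwise disjoint sets, with marginal
`π̂(i) = π(A_i)`, `I_r = {i : A_i ∩ S_r ≠ ∅}`, and
`l̂^r(i) = inf {π^r(A_i) : π^r ∈ P^r_{w,c}}`,
`û^r(i) = sup {π^r(A_i) : π^r ∈ P^r_{w,c}}` on `I_r` (and `0` outside):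
(i) for any `π ∈ P_{w,c}` and `r ≥ 1`, `l̂^r ≤ π̂` on `I`,
    `‖l̂^r - π̂‖ = 1 - ∑_{i ∈ I_r} l̂^r(i)` and
    `‖û^r - π̂‖ ≤ max (∑_{i ∈ I_r} û^r(i) - 1 + m_r) m_r ≤
     max (∑_{i ∈ I_r} û^r(i) - 1 + c/r) (c/r)`;
(ii) if `P_{w,c} = {π}` is a singleton, `û^r → π̂` pointwise and `l̂^r → π̂` in total
     variation. -/
theorem marginal_distribution_bounds
    {σ : Type*} [Countable σ] {ι : Type*} [Countable ι] (q : σ → σ → ℝ)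
    (hq_offdiag : ∀ x y : σ, x ≠ y → 0 ≤ q x y)
    (hq_row : ∀ x : σ, HasSum (fun y => if y = x then 0 else q x y) (-(q x x)))
    (hq_fin : ∀ x : σ, {z : σ | q z x ≠ 0}.Finite)
    (w : σ → ℝ) (hw_nonneg : ∀ x, 0 ≤ w x)
    (hw_norm : ∀ r : ℝ, (truncSet w r).Finite)
    (c : ℝ) (hP : (statSet q w c).Nonempty)
    (A : ι → Set σ) (hA_disj : ∀ i j, i ≠ j → Disjoint (A i) (A j))
    (hA_cover : (⋃ i, A i) = Set.univ)
    (lhat uhat : ℕ → ι → ℝ)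
    (hlhat : ∀ r : ℕ, lhat r =
      ({i : ι | (A i ∩ truncSet w (r : ℝ)).Nonempty}).indicator fun i =>
        sInf {t : ℝ | ∃ ρ ∈ truncPolytope q w c (r : ℝ), t = ∑' x : A i, ρ x})
    (huhat : ∀ r : ℕ, uhat r =
      ({i : ι | (A i ∩ truncSet w (r : ℝ)).Nonempty}).indicator fun i =>
        sSup {t : ℝ | ∃ ρ ∈ truncPolytope q w c (r : ℝ), t = ∑' x : A i, ρ x}) :
    (∀ π ∈ statSet q w c, ∀ r : ℕ, 1 ≤ r →
      (∀ i : ι, lhat r i ≤ ∑' x : A i, π x) ∧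
      tvDist (lhat r) (fun i => ∑' x : A i, π x) = 1 - ∑' i, lhat r i ∧
      tvDist (uhat r) (fun i => ∑' x : A i, π x) ≤
        max ((∑' i, uhat r i) - 1 + ∑' x : ↥(truncSet w (r : ℝ))ᶜ, π x)
          (∑' x : ↥(truncSet w (r : ℝ))ᶜ, π x) ∧
      max ((∑' i, uhat r i) - 1 + ∑' x : ↥(truncSet w (r : ℝ))ᶜ, π x)
          (∑' x : ↥(truncSet w (r : ℝ))ᶜ, π x) ≤
        max ((∑' i, uhat r i) - 1 + c / r) (c / r)) ∧
    (∀ π : σ → ℝ, statSet q w c = {π} →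
      (∀ i : ι, Tendsto (fun r : ℕ => uhat r i) atTop (nhds (∑' x : A i, π x))) ∧
      Tendsto (fun r : ℕ => tvDist (lhat r) (fun i => ∑' x : A i, π x)) atTop
        (nhds 0)) := by
  refine ⟨?_, ?_⟩
  · intro π hπ r hr
    exact part_i q w hw_nonneg hw_norm c A hA_disj hA_cover lhat uhat hlhat huhat π hπ r hr
  · intro π hstat
    exact part_ii q hq_fin w hw_nonneg hw_norm c A hA_disj hA_cover lhat uhat hlhat huhat
      π hstat
end

section
/- (Foster–Lyapunov drift condition for Schlögl's model.) Let Q be the rate matrix of Schlögl's model with rate constants k₁,k₂,k₃,k₄ > 0. For every integer d ≥ 3 and w(x) := x^{d−2}, there exist constants K₁ ∈ ℝ and K₂ > 0 such that Qw(x) := ∑_{y∈ℕ} q(x,y) w(y) = (a₁(x)+a₃(x))((x+1)^{d−2} − x^{d−2}) + (a₂(x)+a₄(x))((x−1)^{d−2} − x^{d−2}) ≤ K₁ − K₂ x^{d−2} for all x ∈ ℕ. -/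
lemma geom_aux_upper (b a : ℝ) (hb : 0 ≤ b) (hab : b ≤ a) (m : ℕ) :
    a ^ (m + 1) - b ^ (m + 1) ≤ ((m : ℝ) + 1) * a ^ m * (a - b) := by
  rw [← geom_sum₂_mul a b (m + 1)]
  have hsum : (∑ i ∈ Finset.range (m + 1), a ^ i * b ^ (m + 1 - 1 - i)) ≤ ((m : ℝ) + 1) * a ^ m := by
    calc (∑ i ∈ Finset.range (m + 1), a ^ i * b ^ (m + 1 - 1 - i))
        ≤ ∑ _i ∈ Finset.range (m + 1), a ^ m := by
          refine Finset.sum_le_sum (fun i hi => ?_)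
          have hi' : i ≤ m := Nat.lt_succ_iff.mp (Finset.mem_range.mp hi)
          have h1 : a ^ i * b ^ (m + 1 - 1 - i) ≤ a ^ i * a ^ (m + 1 - 1 - i) := by
            have := pow_le_pow_left₀ hb hab (m + 1 - 1 - i)
            exact mul_le_mul_of_nonneg_left this (pow_nonneg (hb.trans hab) i)
          have h2 : a ^ i * a ^ (m + 1 - 1 - i) = a ^ m := by
            rw [← pow_add]; congr 1; omega
          linarith
      _ = ((m : ℝ) + 1) * a ^ m := by
          rw [Finset.sum_const, Finset.card_range, nsmul_eq_mul]; push_cast; ring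
  exact mul_le_mul_of_nonneg_right hsum (sub_nonneg.2 hab)

lemma geom_aux_lower (b a : ℝ) (hb : 0 ≤ b) (hab : b ≤ a) (m : ℕ) :
    ((m : ℝ) + 1) * b ^ m * (a - b) ≤ a ^ (m + 1) - b ^ (m + 1) := by
  rw [← geom_sum₂_mul a b (m + 1)]
  have hsum : ((m : ℝ) + 1) * b ^ m ≤ ∑ i ∈ Finset.range (m + 1), a ^ i * b ^ (m + 1 - 1 - i) := by
    calc ((m : ℝ) + 1) * b ^ m
        = ∑ _i ∈ Finset.range (m + 1), b ^ m := by
          rw [Finset.sum_const, Finset.card_range, nsmul_eq_mul]; push_cast; ring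
      _ ≤ ∑ i ∈ Finset.range (m + 1), a ^ i * b ^ (m + 1 - 1 - i) := by
          refine Finset.sum_le_sum (fun i hi => ?_)
          have hi' : i ≤ m := Nat.lt_succ_iff.mp (Finset.mem_range.mp hi)
          have h1 : b ^ i * b ^ (m + 1 - 1 - i) ≤ a ^ i * b ^ (m + 1 - 1 - i) := by
            have := pow_le_pow_left₀ hb hab i
            exact mul_le_mul_of_nonneg_right this (pow_nonneg hb _)
          have h2 : b ^ i * b ^ (m + 1 - 1 - i) = b ^ m := by
            rw [← pow_add]; congr 1; omega
          linarith
  exact mul_le_mul_of_nonneg_right hsum (sub_nonneg.2 hab)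

set_option maxHeartbeats 1000000 in
/-- **Statement 16** (Foster–Lyapunov drift condition for Schlögl's model).
For the rate matrix of Schlögl's model with rate constants `k₁, k₂, k₃, k₄ > 0`,
every integer `d ≥ 3` and `w(x) = x^(d-2)`, there are constants `K₁ ∈ ℝ` and `K₂ > 0`
such that `Qw(x) = (a₁(x) + a₃(x))((x+1)^(d-2) - x^(d-2))
+ (a₂(x) + a₄(x))((x-1)^(d-2) - x^(d-2)) ≤ K₁ - K₂ x^(d-2)` for all `x ∈ ℕ`, where
`a₁(x) = k₁ x (x-1)`, `a₂(x) = k₂ x (x-1) (x-2)`, `a₃(x) = k₃`, `a₄(x) = k₄ x`. -/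
theorem schlogl_foster_lyapunov
    (k₁ k₂ k₃ k₄ : ℝ) (hk₁ : 0 < k₁) (hk₂ : 0 < k₂) (hk₃ : 0 < k₃) (hk₄ : 0 < k₄)
    (d : ℕ) (hd : 3 ≤ d) :
    ∃ (K₁ K₂ : ℝ), 0 < K₂ ∧ ∀ x : ℕ,
      (k₁ * x * ((x : ℝ) - 1) + k₃) * (((x : ℝ) + 1) ^ (d - 2) - (x : ℝ) ^ (d - 2))
        + (k₂ * x * ((x : ℝ) - 1) * ((x : ℝ) - 2) + k₄ * x) *
            (((x : ℝ) - 1) ^ (d - 2) - (x : ℝ) ^ (d - 2))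
      ≤ K₁ - K₂ * (x : ℝ) ^ (d - 2) := by
  obtain ⟨m, rfl⟩ : ∃ m, d = m + 3 := ⟨d - 3, by omega⟩
  simp only [show m + 3 - 2 = m + 1 from by omega]
  set M : ℝ := (m : ℝ) + 1 with hM
  set u : ℝ := 2 ^ m with hu
  have hu0 : (0 : ℝ) < u := by rw [hu]; positivity
  have hM0 : (0 : ℝ) < M := by
    rw [hM]; have : (0:ℝ) ≤ (m : ℝ) := Nat.cast_nonneg m; linarith
  have hM1 : (1 : ℝ) ≤ M := by
    rw [hM]; have : (0:ℝ) ≤ (m : ℝ) := Nat.cast_nonneg m; linarith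
  have hk2M : (0 : ℝ) < k₂ * M := mul_pos hk₂ hM0
  set g : ℕ → ℝ := fun x =>
    (k₁ * x * ((x : ℝ) - 1) + k₃) * (((x : ℝ) + 1) ^ (m + 1) - (x : ℝ) ^ (m + 1))
      + (k₂ * x * ((x : ℝ) - 1) * ((x : ℝ) - 2) + k₄ * x) *
          (((x : ℝ) - 1) ^ (m + 1) - (x : ℝ) ^ (m + 1))
      + (x : ℝ) ^ (m + 1) with hg
  obtain ⟨N, hN4, hNt⟩ : ∃ N : ℕ, 4 ≤ N ∧
      4 * u * (M * u * (k₁ + k₃) + 1) ≤ k₂ * M * N := by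
    refine ⟨max 4 ⌈(4 * u * (M * u * (k₁ + k₃) + 1)) / (k₂ * M)⌉₊, le_max_left _ _, ?_⟩
    have h1 : (4 * u * (M * u * (k₁ + k₃) + 1)) / (k₂ * M)
        ≤ ((max 4 ⌈(4 * u * (M * u * (k₁ + k₃) + 1)) / (k₂ * M)⌉₊ : ℕ) : ℝ) :=
      le_trans (Nat.le_ceil _) (Nat.cast_le.2 (le_max_right _ _))
    have := (div_le_iff₀ hk2M).mp h1
    linarith
  have key : ∀ x : ℕ, N ≤ x → g x ≤ 0 := by
    intro x hx
    simp only [hg]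
    set t : ℝ := (x : ℝ) with hgt
    have h4x : (4 : ℕ) ≤ x := le_trans hN4 hx
    have ht4 : (4 : ℝ) ≤ t := by rw [hgt]; exact_mod_cast h4x
    have hNx : ((N : ℕ) : ℝ) ≤ t := by rw [hgt]; exact_mod_cast hx
    have htc : 4 * u * (M * u * (k₁ + k₃) + 1) ≤ k₂ * M * t := by
      nlinarith [mul_le_mul_of_nonneg_left hNx hk2M.le]
    have ht0 : (0 : ℝ) ≤ t := by linarith
    have ht1 : (0 : ℝ) ≤ t - 1 := by linarith
    have ht2 : (0 : ℝ) ≤ t - 2 := by linarith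
    have hP : (t + 1) ^ (m + 1) - t ^ (m + 1) ≤ M * (t + 1) ^ m := by
      have h := geom_aux_upper t (t + 1) ht0 (by linarith) m
      have he : t + 1 - t = 1 := by ring
      rw [he, mul_one] at h; exact h
    have hQ : M * (t - 1) ^ m ≤ t ^ (m + 1) - (t - 1) ^ (m + 1) := by
      have h := geom_aux_lower (t - 1) t ht1 (by linarith) m
      have he : t - (t - 1) = 1 := by ring
      rw [he, mul_one] at h; exact h
    have hQ0 : (t - 1) ^ (m + 1) - t ^ (m + 1) ≤ 0 := by
      have := pow_le_pow_left₀ ht1 (by linarith : t - 1 ≤ t) (m + 1)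
      linarith
    have hc1 : (0 : ℝ) ≤ k₁ * t * (t - 1) + k₃ := by
      nlinarith [mul_nonneg (mul_nonneg hk₁.le ht0) ht1]
    have hc2 : (0 : ℝ) ≤ k₂ * t * (t - 1) * (t - 2) :=
      mul_nonneg (mul_nonneg (mul_nonneg hk₂.le ht0) ht1) ht2
    have hk4t : (0 : ℝ) ≤ k₄ * t := mul_nonneg hk₄.le ht0
    have T1 : (k₁ * t * (t - 1) + k₃) * ((t + 1) ^ (m + 1) - t ^ (m + 1))
        ≤ (k₁ * t * (t - 1) + k₃) * (M * (t + 1) ^ m) :=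
      mul_le_mul_of_nonneg_left hP hc1
    have T2a : (k₂ * t * (t - 1) * (t - 2) + k₄ * t) * ((t - 1) ^ (m + 1) - t ^ (m + 1))
        ≤ (k₂ * t * (t - 1) * (t - 2)) * ((t - 1) ^ (m + 1) - t ^ (m + 1)) := by
      nlinarith [mul_nonpos_of_nonneg_of_nonpos hk4t hQ0]
    have T2b : (k₂ * t * (t - 1) * (t - 2)) * ((t - 1) ^ (m + 1) - t ^ (m + 1))
        ≤ (k₂ * t * (t - 1) * (t - 2)) * (-(M * (t - 1) ^ m)) :=
      mul_le_mul_of_nonneg_left (by linarith) hc2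
    have hs0 : (0 : ℝ) ≤ t ^ m := pow_nonneg ht0 m
    have hr0 : (0 : ℝ) ≤ (t - 1) ^ m := pow_nonneg ht1 m
    have hp0 : (0 : ℝ) ≤ (t + 1) ^ m := pow_nonneg (by linarith) m
    have hp : (t + 1) ^ m ≤ u * t ^ m := by
      have h := pow_le_pow_left₀ (by linarith : (0:ℝ) ≤ t + 1) (by linarith : t + 1 ≤ 2 * t) m
      rw [mul_pow] at h; rw [hu]; exact h
    have hr : t ^ m ≤ u * (t - 1) ^ m := by
      have h := pow_le_pow_left₀ ht0 (by linarith : t ≤ 2 * (t - 1)) m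
      rw [mul_pow] at h; rw [hu]; exact h
    have hpow : t ^ (m + 1) = t ^ m * t := pow_succ t m
    have hc1le : k₁ * t * (t - 1) + k₃ ≤ (k₁ + k₃) * t ^ 2 := by
      nlinarith [mul_nonneg hk₁.le ht0, mul_nonneg hk₃.le (mul_nonneg ht0 ht1)]
    have hMp : M * (t + 1) ^ m ≤ M * (u * t ^ m) := mul_le_mul_of_nonneg_left hp hM0.le
    have hC1 : (k₁ * t * (t - 1) + k₃) * (M * (t + 1) ^ m)
        ≤ ((k₁ + k₃) * t ^ 2) * (M * (u * t ^ m)) :=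
      mul_le_mul hc1le hMp (mul_nonneg hM0.le hp0)
        (mul_nonneg (by linarith) (pow_nonneg ht0 2))
    have h4u0 : (0 : ℝ) < 4 * u := by linarith
    have hfin : (4 * u) * ((k₁ * t * (t - 1) + k₃) * (M * (t + 1) ^ m)
        + (k₂ * t * (t - 1) * (t - 2)) * (-(M * (t - 1) ^ m)) + t ^ (m + 1))
        ≤ (4 * u) * 0 := by
      rw [mul_zero, hpow]
      have A : 4 * u * (M * u * (k₁ + k₃) + 1) * (t ^ 2 * t ^ m)
          ≤ k₂ * M * t * (t ^ 2 * t ^ m) :=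
        mul_le_mul_of_nonneg_right htc (mul_nonneg (pow_nonneg ht0 2) hs0)
      have B : k₂ * M * t ^ 3 * t ^ m ≤ k₂ * M * t ^ 3 * (u * (t - 1) ^ m) :=
        mul_le_mul_of_nonneg_left hr
          (mul_nonneg (mul_nonneg hk₂.le hM0.le) (pow_nonneg ht0 3))
      have hcube : t ^ 3 ≤ 4 * (t * (t - 1) * (t - 2)) := by nlinarith
      have C : (u * (k₂ * M * (t - 1) ^ m)) * t ^ 3
          ≤ (u * (k₂ * M * (t - 1) ^ m)) * (4 * (t * (t - 1) * (t - 2))) :=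
        mul_le_mul_of_nonneg_left hcube
          (mul_nonneg hu0.le (mul_nonneg (mul_nonneg hk₂.le hM0.le) hr0))
      have htsq : t ≤ t ^ 2 := by nlinarith
      have E : (4 * u) * (t * t ^ m) ≤ (4 * u) * (t ^ 2 * t ^ m) :=
        mul_le_mul_of_nonneg_left (mul_le_mul_of_nonneg_right htsq hs0) h4u0.le
      have hC1' : (4 * u) * ((k₁ * t * (t - 1) + k₃) * (M * (t + 1) ^ m))
          ≤ (4 * u) * (((k₁ + k₃) * t ^ 2) * (M * (u * t ^ m))) :=
        mul_le_mul_of_nonneg_left hC1 h4u0.le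
      linarith [A, B, C, E, hC1']
    have hmain := le_of_mul_le_mul_left hfin h4u0
    linarith
  have hbdd : BddAbove (Set.range g) := by
    refine Filter.IsBoundedUnder.bddAbove_range ⟨0, ?_⟩
    simp only [Filter.eventually_map]
    exact Filter.eventually_atTop.2 ⟨N, key⟩
  obtain ⟨K₁, hK₁⟩ := hbdd
  refine ⟨K₁, 1, one_pos, fun x => ?_⟩
  have hx : g x ≤ K₁ := hK₁ (Set.mem_range_self x)
  rw [hg] at hx
  simp only at hx
  linarith
end

section
/- (Foster–Lyapunov drift condition for the toggle switch.) Let Q be the rate matrix of the toggle switch network with parameters k₁,k₂,k₃,k₄,θ > 0. For every integer d ≥ 1 and w(x) := (x₁+x₂)^d, there exist constants K₁ ∈ ℝ and K₂ > 0 such that Qw(x) := ∑_{y∈ℕ²} q(x,y) w(y) = (a₁(x)+a₃(x))((x₁+x₂+1)^d − (x₁+x₂)^d) + (a₂(x)+a₄(x))((x₁+x₂−1)^d − (x₁+x₂)^d) ≤ K₁ − K₂(x₁+x₂)^d for all x = (x₁,x₂) ∈ ℕ². -/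
private lemma pow_succ_sub_le (a b : ℝ) (hb : 0 ≤ b) (hab : b ≤ a) :
    ∀ m : ℕ, a ^ (m + 1) - b ^ (m + 1) ≤ (m + 1) * (a - b) * a ^ m := by
  intro m
  induction m with
  | zero => norm_num
  | succ m ih =>
    have ha : 0 ≤ a := le_trans hb hab
    have hpow : b ^ (m + 1) ≤ a ^ (m + 1) := pow_le_pow_left₀ hb hab _
    have hbn : 0 ≤ b ^ (m + 1) := pow_nonneg hb _
    have key : a ^ (m + 2) - b ^ (m + 2)
        = a * (a ^ (m + 1) - b ^ (m + 1)) + (a - b) * b ^ (m + 1) := by ring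
    rw [key]
    have h1 : a * (a ^ (m + 1) - b ^ (m + 1)) ≤ a * ((m + 1) * (a - b) * a ^ m) :=
      mul_le_mul_of_nonneg_left ih ha
    have h2 : (a - b) * b ^ (m + 1) ≤ (a - b) * a ^ (m + 1) :=
      mul_le_mul_of_nonneg_left hpow (by linarith)
    have h3 : a * ((m + 1) * (a - b) * a ^ m) = (m + 1) * (a - b) * a ^ (m + 1) := by
      rw [pow_succ]; ring
    push_cast
    nlinarith [h1, h2, h3]

private lemma le_pow_succ_sub (a b : ℝ) (hb : 0 ≤ b) (hab : b ≤ a) :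
    ∀ m : ℕ, (a - b) * a ^ m ≤ a ^ (m + 1) - b ^ (m + 1) := by
  intro m
  induction m with
  | zero => norm_num
  | succ m ih =>
    have ha : 0 ≤ b := hb
    have ha' : 0 ≤ a := le_trans hb hab
    have hbn : 0 ≤ b ^ (m + 1) := pow_nonneg hb _
    have key : a ^ (m + 2) - b ^ (m + 2)
        = a * (a ^ (m + 1) - b ^ (m + 1)) + (a - b) * b ^ (m + 1) := by ring
    rw [key]
    have h1 : a * ((a - b) * a ^ m) ≤ a * (a ^ (m + 1) - b ^ (m + 1)) :=
      mul_le_mul_of_nonneg_left ih ha'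
    have h2 : 0 ≤ (a - b) * b ^ (m + 1) := mul_nonneg (by linarith) hbn
    have h3 : a * ((a - b) * a ^ m) = (a - b) * a ^ (m + 1) := by rw [pow_succ]; ring
    linarith

/-- **Statement 17** (Foster–Lyapunov drift condition for the toggle switch).
For the rate matrix of the toggle switch with parameters `k₁, k₂, k₃, k₄, θ > 0`,
every integer `d ≥ 1` and `w(x) = (x₁ + x₂)^d`, there are constants `K₁ ∈ ℝ` and
`K₂ > 0` such that `Qw(x) = (a₁(x) + a₃(x))((x₁+x₂+1)^d - (x₁+x₂)^d)
+ (a₂(x) + a₄(x))((x₁+x₂-1)^d - (x₁+x₂)^d) ≤ K₁ - K₂ (x₁+x₂)^d` for all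
`x = (x₁, x₂) ∈ ℕ²`, where `a₁(x) = k₁/(1 + (x₂/θ)³)`, `a₂(x) = k₂ x₁`,
`a₃(x) = k₃/(1 + x₁)`, `a₄(x) = k₄ x₂`. -/
theorem toggle_switch_foster_lyapunov
    (k₁ k₂ k₃ k₄ θ : ℝ) (hk₁ : 0 < k₁) (hk₂ : 0 < k₂) (hk₃ : 0 < k₃) (hk₄ : 0 < k₄)
    (hθ : 0 < θ) (d : ℕ) (hd : 1 ≤ d) :
    ∃ (K₁ K₂ : ℝ), 0 < K₂ ∧ ∀ x₁ x₂ : ℕ,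
      (k₁ / (1 + ((x₂ : ℝ) / θ) ^ 3) + k₃ / (1 + (x₁ : ℝ))) *
          (((x₁ : ℝ) + (x₂ : ℝ) + 1) ^ d - ((x₁ : ℝ) + (x₂ : ℝ)) ^ d)
        + (k₂ * (x₁ : ℝ) + k₄ * (x₂ : ℝ)) *
            (((x₁ : ℝ) + (x₂ : ℝ) - 1) ^ d - ((x₁ : ℝ) + (x₂ : ℝ)) ^ d)
      ≤ K₁ - K₂ * ((x₁ : ℝ) + (x₂ : ℝ)) ^ d := by
  obtain ⟨m, rfl⟩ : ∃ m, d = m + 1 := ⟨d - 1, by omega⟩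
  set A : ℝ := k₁ + k₃ with hA_def
  have hA : 0 < A := by positivity
  set c : ℝ := min k₂ k₄ with hc_def
  have hc : 0 < c := lt_min hk₂ hk₄
  set M : ℝ := A * (m + 1) * 2 ^ m with hM_def
  have hM : 0 < M := by positivity
  set ε : ℝ := c / (2 * M) with hε_def
  have hε : 0 < ε := by positivity
  have hMε : M * ε = c / 2 := by
    rw [hε_def]; field_simp
  clear_value A c M ε
  refine ⟨A + M * ((1 / ε) ^ m + 1) + M, c / 2, by linarith, ?_⟩
  intro x₁ x₂
  set s : ℝ := (x₁ : ℝ) + (x₂ : ℝ) with hs_def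
  have hs0 : 0 ≤ s := by rw [hs_def]; positivity
  clear_value s
  -- propensity bounds
  have hden₁ : (1 : ℝ) ≤ 1 + ((x₂ : ℝ) / θ) ^ 3 := by
    have : (0 : ℝ) ≤ ((x₂ : ℝ) / θ) ^ 3 := by positivity
    linarith
  have hden₃ : (1 : ℝ) ≤ 1 + (x₁ : ℝ) := by
    have : (0 : ℝ) ≤ (x₁ : ℝ) := Nat.cast_nonneg _
    linarith
  have ha1 : k₁ / (1 + ((x₂ : ℝ) / θ) ^ 3) ≤ k₁ := div_le_self hk₁.le hden₁
  have ha3 : k₃ / (1 + (x₁ : ℝ)) ≤ k₃ := div_le_self hk₃.le hden₃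
  have ha0 : 0 ≤ k₁ / (1 + ((x₂ : ℝ) / θ) ^ 3) + k₃ / (1 + (x₁ : ℝ)) := by positivity
  have haA : k₁ / (1 + ((x₂ : ℝ) / θ) ^ 3) + k₃ / (1 + (x₁ : ℝ)) ≤ A := by
    rw [hA_def]; linarith
  have hb : c * s ≤ k₂ * (x₁ : ℝ) + k₄ * (x₂ : ℝ) := by
    have h1 : c ≤ k₂ := by rw [hc_def]; exact min_le_left _ _
    have h2 : c ≤ k₄ := by rw [hc_def]; exact min_le_right _ _
    have hx1 : (0 : ℝ) ≤ (x₁ : ℝ) := Nat.cast_nonneg _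
    have hx2 : (0 : ℝ) ≤ (x₂ : ℝ) := Nat.cast_nonneg _
    rw [hs_def]; nlinarith
  -- split on s = 0 or s ≥ 1
  rcases Nat.eq_zero_or_pos (x₁ + x₂) with h | h
  · -- boundary case x = (0,0)
    have h1 : x₁ = 0 := by omega
    have h2 : x₂ = 0 := by omega
    subst h1; subst h2
    have hs' : s = 0 := by rw [hs_def]; norm_num
    rw [hs']
    have hT : (0:ℝ) ≤ (1 / ε) ^ m := by positivity
    have hT' : (0:ℝ) ≤ (ε ^ m)⁻¹ := by positivity
    norm_num
    nlinarith [hM.le, hT, hT', mul_nonneg hM.le hT, mul_nonneg hM.le hT']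
  · -- main case s ≥ 1
    have hs1 : 1 ≤ s := by
      rw [hs_def]
      have : (1 : ℝ) ≤ ((x₁ + x₂ : ℕ) : ℝ) := by exact_mod_cast h
      push_cast at this
      linarith
    have hP : 0 ≤ (s + 1) ^ (m + 1) - s ^ (m + 1) := by
      have := pow_le_pow_left₀ hs0 (by linarith : s ≤ s + 1) (m + 1)
      linarith
    have hPle : (s + 1) ^ (m + 1) - s ^ (m + 1) ≤ (m + 1) * (s + 1) ^ m := by
      have := pow_succ_sub_le (s + 1) s hs0 (by linarith) m
      have h : ((m : ℝ) + 1) * (s + 1 - s) * (s + 1) ^ m = (m + 1) * (s + 1) ^ m := by ring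
      linarith [h ▸ this]
    have hN : (s - 1) ^ (m + 1) - s ^ (m + 1) ≤ -s ^ m := by
      have := le_pow_succ_sub s (s - 1) (by linarith) (by linarith) m
      have h : (s - (s - 1)) * s ^ m = s ^ m := by ring
      linarith [h ▸ this]
    have hN0 : (s - 1) ^ (m + 1) - s ^ (m + 1) ≤ 0 := by
      have : 0 ≤ s ^ m := pow_nonneg hs0 m
      linarith
    -- term 1
    have ht1 : (k₁ / (1 + ((x₂ : ℝ) / θ) ^ 3) + k₃ / (1 + (x₁ : ℝ))) *
        ((s + 1) ^ (m + 1) - s ^ (m + 1)) ≤ A * ((m + 1) * (s + 1) ^ m) := by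
      calc (k₁ / (1 + ((x₂ : ℝ) / θ) ^ 3) + k₃ / (1 + (x₁ : ℝ))) *
            ((s + 1) ^ (m + 1) - s ^ (m + 1))
          ≤ A * ((s + 1) ^ (m + 1) - s ^ (m + 1)) := mul_le_mul_of_nonneg_right haA hP
        _ ≤ A * ((m + 1) * (s + 1) ^ m) := mul_le_mul_of_nonneg_left hPle hA.le
    -- term 2
    have ht2 : (k₂ * (x₁ : ℝ) + k₄ * (x₂ : ℝ)) * ((s - 1) ^ (m + 1) - s ^ (m + 1))
        ≤ -(c * s ^ (m + 1)) := by
      calc (k₂ * (x₁ : ℝ) + k₄ * (x₂ : ℝ)) * ((s - 1) ^ (m + 1) - s ^ (m + 1))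
          ≤ (c * s) * ((s - 1) ^ (m + 1) - s ^ (m + 1)) :=
            mul_le_mul_of_nonpos_right hb hN0
        _ ≤ (c * s) * (-s ^ m) :=
            mul_le_mul_of_nonneg_left hN (by positivity)
        _ = -(c * s ^ (m + 1)) := by rw [pow_succ]; ring
    -- (s+1)^m ≤ 2^m (s^m + 1)
    have hsp : (s + 1) ^ m ≤ 2 ^ m * (s ^ m + 1) := by
      have h1 : s + 1 ≤ 2 * s := by linarith
      have h2 : (s + 1) ^ m ≤ (2 * s) ^ m := pow_le_pow_left₀ (by linarith) h1 m
      have h3 : (2 * s) ^ m = 2 ^ m * s ^ m := mul_pow 2 s m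
      have h4 : (0 : ℝ) ≤ 2 ^ m := by positivity
      have h5 : (2:ℝ) ^ m * (s ^ m + 1) = 2 ^ m * s ^ m + 2 ^ m := by ring
      linarith only [h2, h3, h4, h5]
    -- s^m ≤ ε s^(m+1) + (1/ε)^m
    have hsm : s ^ m ≤ ε * s ^ (m + 1) + (1 / ε) ^ m := by
      rcases le_total s (1 / ε) with h | h
      · have h1 : s ^ m ≤ (1 / ε) ^ m := pow_le_pow_left₀ hs0 h m
        have h2 : 0 ≤ ε * s ^ (m + 1) := by positivity
        linarith
      · have h1 : s ^ (m + 1) = s * s ^ m := by rw [pow_succ]; ring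
        have h2 : 0 ≤ s ^ m := pow_nonneg hs0 m
        have h3 : 1 / ε ≤ s := h
        have h4 : 1 ≤ ε * s := by
          rw [div_le_iff₀ hε] at h3
          linarith only [h3, mul_comm s ε]
        have h5 : 0 ≤ (1 / ε) ^ m := by positivity
        have h6 : 1 * s ^ m ≤ ε * s * s ^ m := mul_le_mul_of_nonneg_right h4 h2
        have h7 : ε * s ^ (m + 1) = ε * s * s ^ m := by rw [h1]; ring
        linarith only [h5, h6, h7]
    -- put it together
    have hchain : A * ((m + 1) * (s + 1) ^ m) ≤ M * s ^ m + M := by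
      have h0 : (0 : ℝ) ≤ A * (m + 1) := by positivity
      have := mul_le_mul_of_nonneg_left hsp h0
      calc A * ((m + 1) * (s + 1) ^ m) = A * (m + 1) * (s + 1) ^ m := by ring
        _ ≤ A * (m + 1) * (2 ^ m * (s ^ m + 1)) := this
        _ = M * s ^ m + M := by rw [hM_def]; ring
    have hchain2 : M * s ^ m ≤ M * ε * s ^ (m + 1) + M * (1 / ε) ^ m := by
      calc M * s ^ m ≤ M * (ε * s ^ (m + 1) + (1 / ε) ^ m) :=
            mul_le_mul_of_nonneg_left hsm hM.le
        _ = M * ε * s ^ (m + 1) + M * (1 / ε) ^ m := by ring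
    have hfinal : M * ε * s ^ (m + 1) = (c / 2) * s ^ (m + 1) := by rw [hMε]
    have hApos : 0 ≤ A := hA.le
    linarith only [ht1, ht2, hchain, hchain2, hfinal, hApos, hM.le]
end
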